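/- Under the hypotheses of the perturbed-chain mixing lemma (each $\|P_t - P^*\|_1 \le \epsilon/(2 t_{\mathrm{mix}}(\epsilon/2))$), for any bounded function $g$ on the finite state space with oscillation $M = \sup_{x,y}(g(x)-g(y))$, and the (non-homogeneous) Markov chain $X_1, X_2, \dots$ generated by $\{P_t\}$, we have $|\mathbb{E}[g(X_t)] - \mathbb{E}_{x\sim\pi^*}[g(x)]| \le M\epsilon$ for all $t \ge t_{\mathrm{mix}}(\epsilon/2)$. -/

import Mathlib

open Finset

variable {X : Type*} [Fintype X]

/-- Apply a stochastic kernel to a distribution: `(step P ρ) x' = ∑ x, P x' x * ρ x`. -/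
noncomputable def step (P : X → X → ℝ) (ρ : X → ℝ) : X → ℝ :=
  fun x' => ∑ x, P x' x * ρ x

/-- `P_t P_{t-1} ⋯ P_1 ρ`, the distribution of the non-homogeneous chain after `t` steps. -/
noncomputable def seqApply (P : ℕ → X → X → ℝ) (ρ : X → ℝ) : ℕ → X → ℝ
  | 0 => ρ
  | (t + 1) => step (P (t + 1)) (seqApply P ρ t)

lemma step_nonneg (P : X → X → ℝ) (ρ : X → ℝ) (hP : ∀ x x', 0 ≤ P x' x)
    (hρ : ∀ x, 0 ≤ ρ x) : ∀ x', 0 ≤ step P ρ x' := fun x' =>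
  Finset.sum_nonneg fun x _ => mul_nonneg (hP x x') (hρ x)

lemma step_sum (P : X → X → ℝ) (ρ : X → ℝ) (hP : ∀ x, ∑ x', P x' x = 1) :
    ∑ x', step P ρ x' = ∑ x, ρ x := by
  unfold step
  rw [Finset.sum_comm]
  simp [← Finset.sum_mul, hP]

lemma seqApply_nonneg (P : ℕ → X → X → ℝ) (ρ : X → ℝ)
    (hP : ∀ t x x', 0 ≤ P t x' x) (hρ : ∀ x, 0 ≤ ρ x) :
    ∀ t x, 0 ≤ seqApply P ρ t x := by
  intro t
  induction t with
  | zero => exact hρ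
  | succ t ih => exact step_nonneg _ _ (hP (t + 1)) ih

lemma seqApply_sum (P : ℕ → X → X → ℝ) (ρ : X → ℝ)
    (hP : ∀ t x, ∑ x', P t x' x = 1) (hρ : ∑ x, ρ x = 1) :
    ∀ t, ∑ x, seqApply P ρ t x = 1 := by
  intro t
  induction t with
  | zero => exact hρ
  | succ t ih => rw [seqApply, step_sum _ _ (hP (t + 1)), ih]

/-- L1 contraction of a stochastic kernel. -/
lemma step_contract (P : X → X → ℝ) (f g : X → ℝ)
    (hP : ∀ x x', 0 ≤ P x' x) (hPs : ∀ x, ∑ x', P x' x = 1) :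
    ∑ x', |step P f x' - step P g x'| ≤ ∑ x, |f x - g x| := by
  have h1 : ∀ x', |step P f x' - step P g x'| ≤ ∑ x, P x' x * |f x - g x| := by
    intro x'
    have : step P f x' - step P g x' = ∑ x, P x' x * (f x - g x) := by
      unfold step; rw [← Finset.sum_sub_distrib]; congr 1; ext x; ring
    rw [this]
    calc |∑ x, P x' x * (f x - g x)| ≤ ∑ x, |P x' x * (f x - g x)| :=
          Finset.abs_sum_le_sum_abs _ _
      _ = ∑ x, P x' x * |f x - g x| := by
          congr 1; ext x; rw [abs_mul, abs_of_nonneg (hP x x')]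
  calc ∑ x', |step P f x' - step P g x'| ≤ ∑ x', ∑ x, P x' x * |f x - g x| :=
        Finset.sum_le_sum fun x' _ => h1 x'
    _ = ∑ x, (∑ x', P x' x) * |f x - g x| := by
        rw [Finset.sum_comm]; congr 1; ext x; rw [Finset.sum_mul]
    _ = ∑ x, |f x - g x| := by simp [hPs]

/-- One-step substitution error. -/
lemma step_err (P Q : X → X → ℝ) (ν : X → ℝ) (δ : ℝ)
    (hν : ∀ x, 0 ≤ ν x) (hνs : ∑ x, ν x = 1)
    (hPQ : ∀ x, ∑ x', |P x' x - Q x' x| ≤ δ) :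
    ∑ x', |step P ν x' - step Q ν x'| ≤ δ := by
  have h1 : ∀ x', |step P ν x' - step Q ν x'| ≤ ∑ x, |P x' x - Q x' x| * ν x := by
    intro x'
    have : step P ν x' - step Q ν x' = ∑ x, (P x' x - Q x' x) * ν x := by
      unfold step; rw [← Finset.sum_sub_distrib]; congr 1; ext x; ring
    rw [this]
    calc |∑ x, (P x' x - Q x' x) * ν x| ≤ ∑ x, |(P x' x - Q x' x) * ν x| :=
          Finset.abs_sum_le_sum_abs _ _
      _ = ∑ x, |P x' x - Q x' x| * ν x := by
          congr 1; ext x; rw [abs_mul, abs_of_nonneg (hν x)]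
  calc ∑ x', |step P ν x' - step Q ν x'| ≤ ∑ x', ∑ x, |P x' x - Q x' x| * ν x :=
        Finset.sum_le_sum fun x' _ => h1 x'
    _ = ∑ x, (∑ x', |P x' x - Q x' x|) * ν x := by
        rw [Finset.sum_comm]; congr 1; ext x; rw [Finset.sum_mul]
    _ ≤ ∑ x, δ * ν x := Finset.sum_le_sum fun x _ =>
        mul_le_mul_of_nonneg_right (hPQ x) (hν x)
    _ = δ := by rw [← Finset.mul_sum, hνs, mul_one]
/-- Hybrid argument: perturbed chain vs ideal chain started from an intermediate distribution. -/
lemma hybrid (Pstar : X → X → ℝ) (P : ℕ → X → X → ℝ) (ρ : X → ℝ) (δ : ℝ)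
    (hPstar_nonneg : ∀ x x', 0 ≤ Pstar x' x)
    (hPstar_sum : ∀ x, ∑ x', Pstar x' x = 1)
    (hP_nonneg : ∀ t x x', 0 ≤ P t x' x)
    (hP_sum : ∀ t x, ∑ x', P t x' x = 1)
    (hρ_nonneg : ∀ x, 0 ≤ ρ x) (hρ_sum : ∑ x, ρ x = 1)
    (hclose : ∀ t x, ∑ x', |P t x' x - Pstar x' x| ≤ δ) (s : ℕ) :
    ∀ k, ∑ x, |seqApply P ρ (s + k) x -
        seqApply (fun _ => Pstar) (seqApply P ρ s) k x| ≤ k * δ := by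
  intro k
  induction k with
  | zero => simp [seqApply]
  | succ k ih =>
    have hμ_nonneg := seqApply_nonneg P ρ hP_nonneg hρ_nonneg (s + k)
    have hμ_sum := seqApply_sum P ρ hP_sum hρ_sum (s + k)
    have h1 : ∑ x, |step (P (s + k + 1)) (seqApply P ρ (s + k)) x -
        step Pstar (seqApply P ρ (s + k)) x| ≤ δ :=
      step_err _ _ _ δ hμ_nonneg hμ_sum (hclose (s + k + 1))
    have h2 : ∑ x, |step Pstar (seqApply P ρ (s + k)) x -
        step Pstar (seqApply (fun _ => Pstar) (seqApply P ρ s) k) x| ≤ k * δ :=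
      le_trans (step_contract Pstar _ _ hPstar_nonneg hPstar_sum) ih
    have htr : ∑ x, |seqApply P ρ (s + (k + 1)) x -
        seqApply (fun _ => Pstar) (seqApply P ρ s) (k + 1) x| ≤
        (∑ x, |step (P (s + k + 1)) (seqApply P ρ (s + k)) x -
          step Pstar (seqApply P ρ (s + k)) x|) +
        ∑ x, |step Pstar (seqApply P ρ (s + k)) x -
          step Pstar (seqApply (fun _ => Pstar) (seqApply P ρ s) k) x| := by
      rw [← Finset.sum_add_distrib]
      apply Finset.sum_le_sum
      intro x _
      have : seqApply P ρ (s + (k + 1)) x = step (P (s + k + 1)) (seqApply P ρ (s + k)) x := by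
        rw [show s + (k + 1) = (s + k) + 1 from rfl]; rfl
      rw [this, show seqApply (fun _ => Pstar) (seqApply P ρ s) (k + 1) x =
        step Pstar (seqApply (fun _ => Pstar) (seqApply P ρ s) k) x from rfl]
      exact abs_sub_le _ _ _
    calc _ ≤ _ := htr
      _ ≤ δ + k * δ := add_le_add h1 h2
      _ = (↑(k + 1)) * δ := by push_cast; ring

/-- For the non-homogeneous chain generated by the perturbed kernels `P_t`, the expectation
of a bounded function `g` with oscillation `M` is within `M ε` of its stationary expectation
after the mixing time. -/
theorem stmt1
    (Pstar : X → X → ℝ) (pistar : X → ℝ) (P : ℕ → X → X → ℝ)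
    (ε : ℝ) (hε : 0 < ε) (tmix : ℕ) (htmix : 0 < tmix)
    (hPstar_nonneg : ∀ x x', 0 ≤ Pstar x' x)
    (hPstar_sum : ∀ x, ∑ x', Pstar x' x = 1)
    (hP_nonneg : ∀ t x x', 0 ≤ P t x' x)
    (hP_sum : ∀ t x, ∑ x', P t x' x = 1)
    (hpistar_nonneg : ∀ x, 0 ≤ pistar x) (hpistar_sum : ∑ x, pistar x = 1)
    (hstat : step Pstar pistar = pistar)
    (hmix : ∀ ρ : X → ℝ, (∀ x, 0 ≤ ρ x) → (∑ x, ρ x = 1) →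
      ∀ t ≥ tmix, ∑ x, |seqApply (fun _ => Pstar) ρ t x - pistar x| ≤ ε / 2)
    (hclose : ∀ t x, ∑ x', |P t x' x - Pstar x' x| ≤ ε / (2 * tmix))
    (ρ : X → ℝ) (hρ_nonneg : ∀ x, 0 ≤ ρ x) (hρ_sum : ∑ x, ρ x = 1)
    (g : X → ℝ) (M : ℝ) (hM : ∀ x y, g x - g y ≤ M) :
    ∀ t ≥ tmix,
      |(∑ x, g x * seqApply P ρ t x) - ∑ x, g x * pistar x| ≤ M * ε := by
  intro t ht
  -- X is nonempty
  cases isEmpty_or_nonempty X with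
  | inl h => simp at hρ_sum
  | inr h =>
    obtain ⟨x₀⟩ := h
    have hM0 : 0 ≤ M := by have := hM x₀ x₀; linarith
    set δ : ℝ := ε / (2 * tmix) with hδ
    set s := t - tmix with hs
    have hst : s + tmix = t := Nat.sub_add_cancel ht
    set ν := seqApply P ρ s with hν
    have hν_nonneg := seqApply_nonneg P ρ hP_nonneg hρ_nonneg s
    have hν_sum := seqApply_sum P ρ hP_sum hρ_sum s
    -- TV bound
    have hTV : ∑ x, |seqApply P ρ t x - pistar x| ≤ ε := by
      have h1 := hybrid Pstar P ρ δ hPstar_nonneg hPstar_sum hP_nonneg hP_sum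
        hρ_nonneg hρ_sum hclose s tmix
      rw [hst] at h1
      have h2 := hmix ν hν_nonneg hν_sum tmix le_rfl
      have htmixδ : (tmix : ℝ) * δ = ε / 2 := by
        rw [hδ]
        field_simp
      have htr : ∑ x, |seqApply P ρ t x - pistar x| ≤
          (∑ x, |seqApply P ρ t x - seqApply (fun _ => Pstar) ν tmix x|) +
          ∑ x, |seqApply (fun _ => Pstar) ν tmix x - pistar x| := by
        rw [← Finset.sum_add_distrib]
        exact Finset.sum_le_sum fun x _ => abs_sub_le _ _ _
      calc _ ≤ _ := htr
        _ ≤ (tmix : ℝ) * δ + ε / 2 := add_le_add h1 h2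
        _ = ε := by rw [htmixδ]; ring
    -- from TV to expectation
    have hμ_sum := seqApply_sum P ρ hP_sum hρ_sum t
    have key : (∑ x, g x * seqApply P ρ t x) - ∑ x, g x * pistar x =
        ∑ x, (g x - g x₀) * (seqApply P ρ t x - pistar x) := by
      have : ∑ x, (g x - g x₀) * (seqApply P ρ t x - pistar x) =
          ((∑ x, g x * seqApply P ρ t x) - ∑ x, g x * pistar x)
          - g x₀ * ((∑ x, seqApply P ρ t x) - ∑ x, pistar x) := by
        rw [← Finset.sum_sub_distrib, ← Finset.sum_sub_distrib, Finset.mul_sum,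
          ← Finset.sum_sub_distrib]
        congr 1; ext x; ring
      rw [this, hμ_sum, hpistar_sum]; ring
    rw [key]
    calc |∑ x, (g x - g x₀) * (seqApply P ρ t x - pistar x)|
        ≤ ∑ x, |(g x - g x₀) * (seqApply P ρ t x - pistar x)| :=
          Finset.abs_sum_le_sum_abs _ _
      _ ≤ ∑ x, M * |seqApply P ρ t x - pistar x| := by
          apply Finset.sum_le_sum
          intro x _
          rw [abs_mul]
          apply mul_le_mul_of_nonneg_right _ (abs_nonneg _)
          exact abs_le.mpr ⟨by linarith [hM x₀ x], hM x x₀⟩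
      _ = M * ∑ x, |seqApply P ρ t x - pistar x| := by rw [Finset.mul_sum]
      _ ≤ M * ε := mul_le_mul_of_nonneg_left hTV hM0
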